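/- In a binary tree-child phylogenetic network with n leaves and h hybrid nodes, the set of tree nodes having neither a hybrid parent nor a hybrid sibling consists of the root together with (n - h - 1) pairs of sibling tree nodes. -/
import Mathlib


/-- In-degree of a node in a directed graph given by its arc relation. -/
noncomputable def indeg {V : Type} (A : V → V → Prop) (v : V) : ℕ := Nat.card {u : V // A u v}

/-- Out-degree of a node in a directed graph given by its arc relation. -/
noncomputable def outdeg {V : Type} (A : V → V → Prop) (v : V) : ℕ := Nat.card {u : V // A v u}

/-- A leaf: degrees (1,0). -/
def IsLeaf {V : Type} (A : V → V → Prop) (v : V) : Prop :=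
  indeg A v = 1 ∧ outdeg A v = 0

/-- A tree node: degrees (1,0) (leaf), (0,2) (root) or (1,2) (internal tree node). -/
def IsTreeNode {V : Type} (A : V → V → Prop) (v : V) : Prop :=
  (indeg A v = 1 ∧ outdeg A v = 0) ∨ (indeg A v = 0 ∧ outdeg A v = 2) ∨
    (indeg A v = 1 ∧ outdeg A v = 2)

/-- A hybrid node: degrees (2,1). -/
def IsHybrid {V : Type} (A : V → V → Prop) (v : V) : Prop :=
  indeg A v = 2 ∧ outdeg A v = 1

/-- A binary tree-child phylogenetic network on the (finite) node set `V`: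
a DAG with a single root, all of whose nodes are tree nodes or hybrid nodes,
and where every non-leaf node has a child that is a tree node. -/
structure BTC (V : Type) [Finite V] where
  Arc : V → V → Prop
  acyclic : ∀ v : V, ¬ Relation.TransGen Arc v v
  uniqueRoot : ∃! r : V, indeg Arc r = 0
  binary : ∀ v : V, IsTreeNode Arc v ∨ IsHybrid Arc v
  treeChild : ∀ v : V, 0 < outdeg Arc v → ∃ w : V, Arc v w ∧ IsTreeNode Arc w

/-- A tree node has a hybrid parent. -/
def HasHybridParent {V : Type} (A : V → V → Prop) (u : V) : Prop :=
  ∃ w : V, IsHybrid A w ∧ A w u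

/-- A node has a hybrid sibling (a hybrid node sharing a parent with it). -/
def HasHybridSibling {V : Type} (A : V → V → Prop) (u : V) : Prop :=
  ∃ w x : V, IsHybrid A w ∧ w ≠ u ∧ A x u ∧ A x w

section AuxStmt10

set_option linter.unusedSectionVars false
open Finset
open scoped Classical

variable {V : Type} [Fintype V]

noncomputable def parents (A : V → V → Prop) (v : V) : Finset V := univ.filter (fun u => A u v)
noncomputable def children (A : V → V → Prop) (v : V) : Finset V := univ.filter (fun u => A v u)

lemma mem_parents {A : V → V → Prop} {u v : V} : u ∈ parents A v ↔ A u v := by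
  simp [parents]

lemma mem_children {A : V → V → Prop} {u v : V} : u ∈ children A v ↔ A v u := by
  simp [children]

lemma indeg_eq (A : V → V → Prop) (v : V) : indeg A v = (parents A v).card := by
  rw [indeg, Nat.card_eq_fintype_card, Fintype.card_subtype]
  rfl

lemma outdeg_eq (A : V → V → Prop) (v : V) : outdeg A v = (children A v).card := by
  rw [outdeg, Nat.card_eq_fintype_card, Fintype.card_subtype]
  rfl

lemma ncard_eq (p : V → Prop) : Nat.card {v : V // p v} = (univ.filter p).card := by
  rw [Nat.card_eq_fintype_card, Fintype.card_subtype]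

lemma handshake (A : V → V → Prop) : ∑ v, indeg A v = ∑ v, outdeg A v := by
  simp_rw [indeg_eq, outdeg_eq, parents, children, card_filter]
  exact Finset.sum_comm

lemma hybrid_not_tree {A : V → V → Prop} {v : V} (hv : IsHybrid A v) : ¬ IsTreeNode A v := by
  rcases hv with ⟨h1, h2⟩
  rintro (⟨a, b⟩ | ⟨a, b⟩ | ⟨a, b⟩) <;> omega

lemma parent_unique {A : V → V → Prop} {u x : V} (hu : IsTreeNode A u) (hx : A x u) :
    parents A u = {x} := by
  have hne : indeg A u ≠ 0 := by
    rw [indeg_eq]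
    intro hc
    rw [Finset.card_eq_zero] at hc
    exact (Finset.notMem_empty x) (hc ▸ mem_parents.2 hx)
  have h1 : indeg A u = 1 := by
    rcases hu with ⟨a, b⟩ | ⟨a, b⟩ | ⟨a, b⟩ <;> omega
  rw [indeg_eq] at h1
  rcases Finset.card_eq_one.1 h1 with ⟨a, ha⟩
  have := ha ▸ mem_parents.2 hx
  rw [Finset.mem_singleton] at this
  rw [ha, this]

section
variable {N : BTC V}

/-- parents of a hybrid node are not hybrid -/
lemma hybrid_child_tree {w : V} (hw : IsHybrid N.Arc w) :
    ∃ u, children N.Arc w = {u} ∧ IsTreeNode N.Arc u ∧ parents N.Arc u = {w} := by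
  have h1 : (children N.Arc w).card = 1 := by rw [← outdeg_eq]; exact hw.2
  rcases Finset.card_eq_one.1 h1 with ⟨u, hu⟩
  have hpos : 0 < outdeg N.Arc w := by rw [hw.2]; omega
  rcases N.treeChild w hpos with ⟨c, hc, hct⟩
  have : c ∈ children N.Arc w := mem_children.2 hc
  rw [hu, Finset.mem_singleton] at this
  subst this
  exact ⟨c, hu, hct, parent_unique hct (by have : c ∈ children N.Arc w := hu ▸ Finset.mem_singleton_self c; exact mem_children.1 this)⟩

lemma hybrid_parent_not_hybrid {w x : V} (hw : IsHybrid N.Arc w) (hx : N.Arc x w) :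
    ¬ IsHybrid N.Arc x := by
  intro hxh
  rcases hybrid_child_tree hxh with ⟨u, hu, hut, -⟩
  have : w ∈ children N.Arc x := mem_children.2 hx
  rw [hu, Finset.mem_singleton] at this
  exact hybrid_not_tree hw (this ▸ hut)

/-- a non-hybrid node with a child has exactly two children -/
lemma two_children {x u : V} (hxh : ¬ IsHybrid N.Arc x) (hxu : N.Arc x u) :
    ∃ w, w ≠ u ∧ children N.Arc x = {u, w} := by
  have hne : outdeg N.Arc x ≠ 0 := by
    rw [outdeg_eq]
    intro hc
    rw [Finset.card_eq_zero] at hc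
    exact (Finset.notMem_empty u) (hc ▸ mem_children.2 hxu)
  have h2 : outdeg N.Arc x = 2 := by
    rcases N.binary x with (⟨a, b⟩ | ⟨a, b⟩ | ⟨a, b⟩) | hyb
    · omega
    · omega
    · omega
    · exact absurd hyb hxh
  rw [outdeg_eq] at h2
  rcases Finset.card_eq_two.1 h2 with ⟨a, b, hab, hset⟩
  have hu : u ∈ children N.Arc x := mem_children.2 hxu
  rw [hset, Finset.mem_insert, Finset.mem_singleton] at hu
  rcases hu with rfl | rfl
  · exact ⟨b, fun hc => hab hc.symm, hset⟩
  · exact ⟨a, fun hc => hab hc, by rw [hset, Finset.pair_comm]⟩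

/-- the structural lemma for nodes in the good set -/
lemma sibling_struct {u : V} (hu : IsTreeNode N.Arc u) (hnp : ¬ HasHybridParent N.Arc u)
    (hns : ¬ HasHybridSibling N.Arc u) {x : V} (hx : N.Arc x u) :
    ∃ w, w ≠ u ∧ N.Arc x w ∧ children N.Arc x = {u, w} ∧ parents N.Arc u = {x} ∧
      IsTreeNode N.Arc w ∧ ¬ HasHybridParent N.Arc w ∧ ¬ HasHybridSibling N.Arc w ∧
      parents N.Arc w = {x} := by
  have hxh : ¬ IsHybrid N.Arc x := fun hc => hnp ⟨x, hc, hx⟩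
  rcases two_children hxh hx with ⟨w, hwu, hch⟩
  have hxw : N.Arc x w := mem_children.1 (by rw [hch]; simp)
  have hwh : ¬ IsHybrid N.Arc w := fun hc => hns ⟨w, x, hc, hwu, hx, hxw⟩
  have hwt : IsTreeNode N.Arc w := (N.binary w).resolve_right hwh
  have hpw : parents N.Arc w = {x} := parent_unique hwt hxw
  refine ⟨w, hwu, hxw, hch, parent_unique hu hx, hwt, ?_, ?_, hpw⟩
  · rintro ⟨z, hz, hzw⟩
    have : z ∈ parents N.Arc w := mem_parents.2 hzw
    rw [hpw, Finset.mem_singleton] at this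
    exact hxh (this ▸ hz)
  · rintro ⟨w', x', hw', hww', hx'w, hx'w'⟩
    have : x' ∈ parents N.Arc w := mem_parents.2 hx'w
    rw [hpw, Finset.mem_singleton] at this
    have hw'c : w' ∈ children N.Arc x := by rw [this] at hx'w'; exact mem_children.2 hx'w'
    rw [hch, Finset.mem_insert, Finset.mem_singleton] at hw'c
    rcases hw'c with rfl | rfl
    · exact hybrid_not_tree hw' hu
    · exact hww' rfl

end

section
variable {N : BTC V}

lemma root_tree {r : V} (hr : indeg N.Arc r = 0) :
    IsTreeNode N.Arc r ∧ ¬ HasHybridParent N.Arc r ∧ ¬ HasHybridSibling N.Arc r := by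
  have hnp : ∀ x : V, ¬ N.Arc x r := by
    intro x hx
    have : x ∈ parents N.Arc r := mem_parents.2 hx
    rw [indeg_eq, Finset.card_eq_zero] at hr
    rw [hr] at this
    exact Finset.notMem_empty x this
  refine ⟨?_, ?_, ?_⟩
  · rcases N.binary r with ht | hy
    · exact ht
    · rw [hy.1] at hr; omega
  · rintro ⟨w, -, hw⟩; exact hnp w hw
  · rintro ⟨w, x, -, -, hx, -⟩; exact hnp x hx

lemma total_count {r : V} (hr : indeg N.Arc r = 0) (hru : ∀ v, indeg N.Arc v = 0 → v = r) :
    Fintype.card V + 1 =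
      2 * (univ.filter (IsLeaf N.Arc)).card + 2 * (univ.filter (IsHybrid N.Arc)).card := by
  have hin : ∀ v, indeg N.Arc v = (if IsHybrid N.Arc v then 1 else 0) + (if v = r then 0 else 1) := by
    intro v
    by_cases hvr : v = r
    · subst hvr
      have : ¬ IsHybrid N.Arc v := fun hc => by rw [hc.1] at hr; omega
      simp [this, hr]
    · have hne : indeg N.Arc v ≠ 0 := fun hc => hvr (hru v hc)
      rcases N.binary v with (⟨a, b⟩ | ⟨a, b⟩ | ⟨a, b⟩) | hy
      · have : ¬ IsHybrid N.Arc v := fun hc => by rw [hc.1] at a; omega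
        simp [this, hvr, a]
      · exact absurd (hru v a) hvr
      · have : ¬ IsHybrid N.Arc v := fun hc => by rw [hc.1] at a; omega
        simp [this, hvr, a]
      · simp [hy, hy.1, hvr]
  have hout : ∀ v, outdeg N.Arc v + (2 * (if IsLeaf N.Arc v then 1 else 0)
      + (if IsHybrid N.Arc v then 1 else 0)) = 2 := by
    intro v
    rcases N.binary v with (⟨a, b⟩ | ⟨a, b⟩ | ⟨a, b⟩) | hy
    · have h1 : IsLeaf N.Arc v := ⟨a, b⟩
      have h2 : ¬ IsHybrid N.Arc v := fun hc => by rw [hc.1] at a; omega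
      simp [h1, h2, b]
    · have h1 : ¬ IsLeaf N.Arc v := fun hc => by rw [hc.2] at b; omega
      have h2 : ¬ IsHybrid N.Arc v := fun hc => by rw [hc.1] at a; omega
      simp [h1, h2, b]
    · have h1 : ¬ IsLeaf N.Arc v := fun hc => by rw [hc.2] at b; omega
      have h2 : ¬ IsHybrid N.Arc v := fun hc => by rw [hc.1] at a; omega
      simp [h1, h2, b]
    · have h1 : ¬ IsLeaf N.Arc v := fun hc => by have := hy.1; have := hc.1; omega
      simp [h1, hy, hy.2]
  have e1 : ∑ v, indeg N.Arc v + 1 = (univ.filter (IsHybrid N.Arc)).card + Fintype.card V := by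
    have : ∑ v, indeg N.Arc v = ∑ v, ((if IsHybrid N.Arc v then 1 else 0) + (if v = r then 0 else 1)) :=
      Finset.sum_congr rfl (fun v _ => hin v)
    rw [this, Finset.sum_add_distrib]
    have ha : ∑ v, (if IsHybrid N.Arc v then 1 else 0) = (univ.filter (IsHybrid N.Arc)).card :=
      (Finset.card_filter _ _).symm
    have hb : ∑ v : V, ((if v = r then 0 else 1) : ℕ) + 1 = Fintype.card V := by
      have h1 : ∑ v : V, ((if v = r then (1:ℕ) else 0)) = 1 := by
        rw [Finset.sum_ite_eq' univ r (fun _ => (1:ℕ))]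
        simp
      have h2 : ∑ v : V, (((if v = r then 0 else 1) : ℕ) + (if v = r then 1 else 0))
          = Fintype.card V := by
        rw [← Finset.card_univ, Finset.card_eq_sum_ones]
        exact Finset.sum_congr rfl (fun v _ => by split <;> ring)
      rw [Finset.sum_add_distrib, h1] at h2
      exact h2
    omega
  have e2 : ∑ v, outdeg N.Arc v + (2 * (univ.filter (IsLeaf N.Arc)).card
      + (univ.filter (IsHybrid N.Arc)).card) = 2 * Fintype.card V := by
    have h2 : ∑ v, (outdeg N.Arc v + (2 * (if IsLeaf N.Arc v then 1 else 0)
        + (if IsHybrid N.Arc v then 1 else 0))) = 2 * Fintype.card V := by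
      rw [Finset.sum_congr rfl (fun v _ => hout v), Finset.sum_const, Finset.card_univ,
        smul_eq_mul, mul_comm]
    rw [Finset.sum_add_distrib, Finset.sum_add_distrib, ← Finset.mul_sum] at h2
    rw [← Finset.card_filter, ← Finset.card_filter] at h2
    exact h2
  have e3 := handshake N.Arc
  omega

lemma tree_count : (univ.filter (IsTreeNode N.Arc)).card + (univ.filter (IsHybrid N.Arc)).card
    = Fintype.card V := by
  have := Finset.card_filter_add_card_filter_not (s := univ)
    (p := IsTreeNode N.Arc)
  rw [Finset.card_univ] at this
  have hfe : (univ.filter (fun a => ¬ IsTreeNode N.Arc a)) = univ.filter (IsHybrid N.Arc) :=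
    Finset.filter_congr (fun v _ =>
      ⟨fun hv => (N.binary v).resolve_left hv, fun h => hybrid_not_tree h⟩)
  rw [hfe] at this
  exact this

lemma b1_count : (univ.filter
      (fun u => IsTreeNode N.Arc u ∧ HasHybridParent N.Arc u)).card
    = (univ.filter (IsHybrid N.Arc)).card := by
  symm
  apply Finset.card_bij (fun w hw => (hybrid_child_tree
    (Finset.mem_filter.1 hw).2).choose)
  · intro w hw
    obtain ⟨hc, ht, hp⟩ := (hybrid_child_tree (Finset.mem_filter.1 hw).2).choose_spec
    set u := (hybrid_child_tree (Finset.mem_filter.1 hw).2).choose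
    have harc : N.Arc w u := mem_children.1 (by rw [hc]; simp)
    exact Finset.mem_filter.2 ⟨Finset.mem_univ u, ht, w, (Finset.mem_filter.1 hw).2, harc⟩
  · intro w1 hw1 w2 hw2 heq
    obtain ⟨hc1, ht1, hp1⟩ := (hybrid_child_tree (Finset.mem_filter.1 hw1).2).choose_spec
    obtain ⟨hc2, ht2, hp2⟩ := (hybrid_child_tree (Finset.mem_filter.1 hw2).2).choose_spec
    rw [heq] at hp1
    rw [hp1] at hp2
    exact Finset.singleton_inj.1 hp2
  · intro u hu
    obtain ⟨-, ht, w, hw, harc⟩ := Finset.mem_filter.1 hu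
    refine ⟨w, Finset.mem_filter.2 ⟨Finset.mem_univ w, hw⟩, ?_⟩
    obtain ⟨hc, -, -⟩ := (hybrid_child_tree
      (Finset.mem_filter.1 (Finset.mem_filter.2 ⟨Finset.mem_univ w, hw⟩ : w ∈ univ.filter (IsHybrid N.Arc))).2).choose_spec
    have : u ∈ children N.Arc w := mem_children.2 harc
    rw [hc, Finset.mem_singleton] at this
    exact this.symm

end

section
variable {N : BTC V}

lemma hybrid_sib {x w : V} (hw : IsHybrid N.Arc w) (hxw : N.Arc x w) :
    ∃ u, u ≠ w ∧ children N.Arc x = {w, u} ∧ N.Arc x u ∧ parents N.Arc u = {x} ∧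
      IsTreeNode N.Arc u ∧ ¬ HasHybridParent N.Arc u ∧ HasHybridSibling N.Arc u := by
  have hxh := hybrid_parent_not_hybrid hw hxw
  rcases two_children hxh hxw with ⟨u, huw, hch⟩
  have hxu : N.Arc x u := mem_children.1 (by rw [hch]; simp)
  have hut : IsTreeNode N.Arc u := by
    have hpos : 0 < outdeg N.Arc x := by
      rw [outdeg_eq]
      exact Finset.card_pos.2 ⟨w, mem_children.2 hxw⟩
    rcases N.treeChild x hpos with ⟨c, hc, hct⟩
    have hcm : c ∈ children N.Arc x := mem_children.2 hc
    rw [hch, Finset.mem_insert, Finset.mem_singleton] at hcm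
    rcases hcm with rfl | rfl
    · exact absurd hct (hybrid_not_tree hw)
    · exact hct
  have hpu : parents N.Arc u = {x} := parent_unique hut hxu
  refine ⟨u, huw, hch, hxu, hpu, hut, ?_, ⟨w, x, hw, Ne.symm huw, hxu, hxw⟩⟩
  rintro ⟨z, hz, hzu⟩
  have : z ∈ parents N.Arc u := mem_parents.2 hzu
  rw [hpu, Finset.mem_singleton] at this
  exact hxh (this ▸ hz)

lemma b2_count : (univ.filter (fun u => IsTreeNode N.Arc u ∧ ¬ HasHybridParent N.Arc u ∧
      HasHybridSibling N.Arc u)).card = 2 * (univ.filter (IsHybrid N.Arc)).card := by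
  have step1 : (univ.filter (fun p : V × V => IsHybrid N.Arc p.2 ∧ N.Arc p.1 p.2)).card
      = 2 * (univ.filter (IsHybrid N.Arc)).card := by
    rw [Finset.card_eq_sum_card_fiberwise (f := Prod.snd)
      (t := univ.filter (IsHybrid N.Arc))
      (fun p hp => Finset.mem_filter.2 ⟨Finset.mem_univ _, (Finset.mem_filter.1 hp).2.1⟩)]
    have hfib : ∀ w ∈ univ.filter (IsHybrid N.Arc),
        ((univ.filter (fun p : V × V => IsHybrid N.Arc p.2 ∧ N.Arc p.1 p.2)).filter
          (fun p => p.2 = w)).card = 2 := by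
      intro w hw
      have hwh : IsHybrid N.Arc w := (Finset.mem_filter.1 hw).2
      have hcard : ((univ.filter (fun p : V × V => IsHybrid N.Arc p.2 ∧ N.Arc p.1 p.2)).filter
          (fun p => p.2 = w)).card = (parents N.Arc w).card := by
        apply Finset.card_bij (fun p _ => p.1)
        · intro p hp
          obtain ⟨hp1, hp2⟩ := Finset.mem_filter.1 hp
          obtain ⟨-, harc⟩ := (Finset.mem_filter.1 hp1).2
          rw [hp2] at harc
          exact mem_parents.2 harc
        · intro p1 hp1 p2 hp2 heq
          have e1 := (Finset.mem_filter.1 hp1).2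
          have e2 := (Finset.mem_filter.1 hp2).2
          exact Prod.ext heq (e1.trans e2.symm)
        · intro x hx
          exact ⟨(x, w), Finset.mem_filter.2 ⟨Finset.mem_filter.2
            ⟨Finset.mem_univ _, hwh, mem_parents.1 hx⟩, rfl⟩, rfl⟩
      rw [hcard, ← indeg_eq, hwh.1]
    rw [Finset.sum_congr rfl hfib, Finset.sum_const, smul_eq_mul, mul_comm]
  rw [← step1]
  symm
  apply Finset.card_bij (fun p hp => (hybrid_sib (Finset.mem_filter.1 hp).2.1
    (Finset.mem_filter.1 hp).2.2).choose)
  · intro p hp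
    obtain ⟨hne, hch, hxu, hpu, hut, hnp, hhs⟩ := (hybrid_sib (Finset.mem_filter.1 hp).2.1
      (Finset.mem_filter.1 hp).2.2).choose_spec
    exact Finset.mem_filter.2 ⟨Finset.mem_univ _, hut, hnp, hhs⟩
  · intro p1 hp1 p2 hp2 heq
    obtain ⟨hne1, hch1, hxu1, hpu1, hut1, -, -⟩ := (hybrid_sib (Finset.mem_filter.1 hp1).2.1
      (Finset.mem_filter.1 hp1).2.2).choose_spec
    obtain ⟨hne2, hch2, hxu2, hpu2, hut2, -, -⟩ := (hybrid_sib (Finset.mem_filter.1 hp2).2.1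
      (Finset.mem_filter.1 hp2).2.2).choose_spec
    rw [heq] at hpu1 hch1 hne1
    have hx12 : p1.1 = p2.1 := Finset.singleton_inj.1 (hpu1.symm.trans hpu2)
    rw [hx12] at hch1
    have hmem : p1.2 ∈ children N.Arc p2.1 := by
      rw [hch1]; exact Finset.mem_insert_self _ _
    rw [hch2, Finset.mem_insert, Finset.mem_singleton] at hmem
    rcases hmem with h | h
    · exact Prod.ext hx12 h
    · exact absurd h.symm hne1
  · intro u hu
    obtain ⟨-, hut, hnp, w, x, hw, hwu, hxu, hxw⟩ := Finset.mem_filter.1 hu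
    have hpm : (x, w) ∈ univ.filter (fun p : V × V => IsHybrid N.Arc p.2 ∧ N.Arc p.1 p.2) :=
      Finset.mem_filter.2 ⟨Finset.mem_univ _, hw, hxw⟩
    refine ⟨(x, w), hpm, ?_⟩
    obtain ⟨hne, hch, -, -, -, -, -⟩ := (hybrid_sib (Finset.mem_filter.1 hpm).2.1
      (Finset.mem_filter.1 hpm).2.2).choose_spec
    have : u ∈ children N.Arc x := mem_children.2 hxu
    rw [hch, Finset.mem_insert, Finset.mem_singleton] at this
    rcases this with h | h
    · exact absurd h.symm hwu
    · exact h.symm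

end

theorem stmt10' {V : Type} [Fintype V] (N : BTC V) (n h : ℕ)
    (hn : n = Nat.card {v : V // IsLeaf N.Arc v})
    (hh : h = Nat.card {v : V // IsHybrid N.Arc v}) :
    ∃ (r : V) (P : Finset (V × V)),
      indeg N.Arc r = 0 ∧
      (P.card : ℤ) = (n : ℤ) - (h : ℤ) - 1 ∧
      (∀ q ∈ P, q.1 ≠ q.2 ∧ (∃ x : V, N.Arc x q.1 ∧ N.Arc x q.2)) ∧
      (∀ q ∈ P, ∀ q' ∈ P, q ≠ q' →
        q.1 ≠ q'.1 ∧ q.1 ≠ q'.2 ∧ q.2 ≠ q'.1 ∧ q.2 ≠ q'.2) ∧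
      (∀ u : V,
        (IsTreeNode N.Arc u ∧ ¬ HasHybridParent N.Arc u ∧
          ¬ HasHybridSibling N.Arc u) ↔
        (u = r ∨ ∃ q ∈ P, u = q.1 ∨ u = q.2)) := by
  obtain ⟨r, hr, hru⟩ := N.uniqueRoot
  set f : V → ℕ := fun v => ((Fintype.equivFin V) v : ℕ) with hf
  have finj : Function.Injective f := fun a b hab =>
    (Fintype.equivFin V).injective (Fin.val_injective hab)
  -- counting
  have hn' : n = (univ.filter (IsLeaf N.Arc)).card := by rw [hn, ncard_eq]
  have hh' : h = (univ.filter (IsHybrid N.Arc)).card := by rw [hh, ncard_eq]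
  have e_total : Fintype.card V + 1 = 2 * n + 2 * h := by
    rw [hn', hh']; exact total_count hr (fun v hv => hru v hv)
  set T := univ.filter (IsTreeNode N.Arc) with hT
  have e_tree : T.card + h = Fintype.card V := by rw [hh']; exact tree_count
  have s1 : (T.filter (HasHybridParent N.Arc)).card
      + (T.filter (fun u => ¬ HasHybridParent N.Arc u)).card = T.card :=
    Finset.card_filter_add_card_filter_not (p := HasHybridParent N.Arc)
  have s2 : ((T.filter (fun u => ¬ HasHybridParent N.Arc u)).filter (HasHybridSibling N.Arc)).card
      + ((T.filter (fun u => ¬ HasHybridParent N.Arc u)).filter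
          (fun u => ¬ HasHybridSibling N.Arc u)).card
      = (T.filter (fun u => ¬ HasHybridParent N.Arc u)).card :=
    Finset.card_filter_add_card_filter_not (p := HasHybridSibling N.Arc)
  have e_b1 : (T.filter (HasHybridParent N.Arc)).card = h := by
    rw [hT, Finset.filter_filter, hh']
    exact b1_count
  have e_b2 : ((T.filter (fun u => ¬ HasHybridParent N.Arc u)).filter
      (HasHybridSibling N.Arc)).card = 2 * h := by
    rw [hT, Finset.filter_filter, Finset.filter_filter, hh']
    rw [Finset.filter_congr (q := fun u => IsTreeNode N.Arc u ∧ ¬ HasHybridParent N.Arc u ∧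
      HasHybridSibling N.Arc u) (fun v _ => by tauto)]
    exact b2_count
  set Sf := univ.filter (fun u => IsTreeNode N.Arc u ∧ ¬ HasHybridParent N.Arc u ∧
    ¬ HasHybridSibling N.Arc u) with hSf
  have e_sf : ((T.filter (fun u => ¬ HasHybridParent N.Arc u)).filter
      (fun u => ¬ HasHybridSibling N.Arc u)) = Sf := by
    rw [hT, Finset.filter_filter, Finset.filter_filter, hSf]
  rw [e_sf] at s2
  have hrSf : r ∈ Sf := by
    obtain ⟨h1, h2, h3⟩ := root_tree (N := N) hr
    exact Finset.mem_filter.2 ⟨Finset.mem_univ r, h1, h2, h3⟩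
  set S' := Sf.erase r with hS'
  have e_erase : S'.card + 1 = Sf.card := Finset.card_erase_add_one hrSf
  -- so: S'.card + 2h + 2 = 2n
  have e_main : S'.card + 2 * h + 2 = 2 * n := by omega
  -- membership in S'
  have memS' : ∀ u : V, u ∈ S' ↔ (u ≠ r ∧ IsTreeNode N.Arc u ∧ ¬ HasHybridParent N.Arc u ∧
      ¬ HasHybridSibling N.Arc u) := by
    intro u
    rw [hS', Finset.mem_erase, hSf, Finset.mem_filter]
    simp only [Finset.mem_univ, true_and]
  -- structure of elements of S'
  have struct : ∀ u ∈ S', ∃ x w, parents N.Arc u = {x} ∧ children N.Arc x = {u, w} ∧ w ≠ u ∧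
      N.Arc x u ∧ N.Arc x w ∧ w ∈ S' := by
    intro u hu
    obtain ⟨hur, hut, hunp, huns⟩ := (memS' u).1 hu
    have hne : indeg N.Arc u ≠ 0 := fun hc => hur (hru u hc)
    rw [indeg_eq] at hne
    obtain ⟨x, hx⟩ := Finset.card_pos.1 (Nat.pos_of_ne_zero hne)
    have hxu : N.Arc x u := mem_parents.1 hx
    obtain ⟨w, hwu, hxw, hch, hpu, hwt, hwnp, hwns, hpw⟩ := sibling_struct hut hunp huns hxu
    have hwr : w ≠ r := by
      intro hc
      subst hc
      rw [indeg_eq, hpw] at hr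
      simp at hr
    exact ⟨x, w, hpu, hch, hwu, hxu, hxw, (memS' w).2 ⟨hwr, hwt, hwnp, hwns⟩⟩
  set P : Finset (V × V) := univ.filter (fun q : V × V => q.1 ∈ S' ∧ q.2 ∈ S' ∧ f q.1 < f q.2 ∧
    ∃ x, N.Arc x q.1 ∧ N.Arc x q.2) with hP
  have memP : ∀ q : V × V, q ∈ P ↔ (q.1 ∈ S' ∧ q.2 ∈ S' ∧ f q.1 < f q.2 ∧
      ∃ x, N.Arc x q.1 ∧ N.Arc x q.2) := by
    intro q
    rw [hP, Finset.mem_filter]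
    simp only [Finset.mem_univ, true_and]
  -- pair determination
  have sub : ∀ u ∈ S', ∀ x w, parents N.Arc u = {x} → children N.Arc x = {u, w} →
      ∀ q ∈ P, (u = q.1 ∨ u = q.2) → (q.1 = u ∧ q.2 = w) ∨ (q.1 = w ∧ q.2 = u) := by
    intro u _ x w hpu hch q hq huq
    obtain ⟨-, -, hlt, xq, hq1, hq2⟩ := (memP q).1 hq
    rcases huq with rfl | rfl
    · have hxq : xq = x := by
        have := mem_parents.2 hq1
        rw [hpu, Finset.mem_singleton] at this
        exact this
      subst hxq
      have h2 : q.2 ∈ children N.Arc xq := mem_children.2 hq2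
      rw [hch, Finset.mem_insert, Finset.mem_singleton] at h2
      rcases h2 with h2 | h2
      · exfalso; rw [h2] at hlt; exact lt_irrefl _ hlt
      · exact Or.inl ⟨rfl, h2⟩
    · have hxq : xq = x := by
        have := mem_parents.2 hq2
        rw [hpu, Finset.mem_singleton] at this
        exact this
      subst hxq
      have h1 : q.1 ∈ children N.Arc xq := mem_children.2 hq1
      rw [hch, Finset.mem_insert, Finset.mem_singleton] at h1
      rcases h1 with h1 | h1
      · exfalso; rw [h1] at hlt; exact lt_irrefl _ hlt
      · exact Or.inr ⟨h1, rfl⟩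
  have pdet : ∀ q ∈ P, ∀ q' ∈ P,
      (q.1 = q'.1 ∨ q.1 = q'.2 ∨ q.2 = q'.1 ∨ q.2 = q'.2) → q = q' := by
    intro q hq q' hq' hshare
    obtain ⟨u, huS, huq, huq'⟩ : ∃ u, u ∈ S' ∧ (u = q.1 ∨ u = q.2) ∧ (u = q'.1 ∨ u = q'.2) := by
      obtain ⟨h1, h2, -, -⟩ := (memP q).1 hq
      rcases hshare with hs | hs | hs | hs
      · exact ⟨q.1, h1, Or.inl rfl, Or.inl hs⟩
      · exact ⟨q.1, h1, Or.inl rfl, Or.inr hs⟩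
      · exact ⟨q.2, h2, Or.inr rfl, Or.inl hs⟩
      · exact ⟨q.2, h2, Or.inr rfl, Or.inr hs⟩
    obtain ⟨x, w, hpu, hch, -, -, -, -⟩ := struct u huS
    have c1 := sub u huS x w hpu hch q hq huq
    have c2 := sub u huS x w hpu hch q' hq' huq'
    have hlt := ((memP q).1 hq).2.2.1
    have hlt' := ((memP q').1 hq').2.2.1
    rcases c1 with ⟨a1, a2⟩ | ⟨a1, a2⟩ <;> rcases c2 with ⟨b1, b2⟩ | ⟨b1, b2⟩
    · exact Prod.ext (a1.trans b1.symm) (a2.trans b2.symm)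
    · rw [a1, a2] at hlt
      rw [b1, b2] at hlt'
      exact absurd hlt' (Nat.lt_asymm hlt)
    · rw [a1, a2] at hlt
      rw [b1, b2] at hlt'
      exact absurd hlt' (Nat.lt_asymm hlt)
    · exact Prod.ext (a1.trans b1.symm) (a2.trans b2.symm)
  -- coverage
  have cover : ∀ u ∈ S', ∃ q ∈ P, u = q.1 ∨ u = q.2 := by
    intro u hu
    obtain ⟨x, w, hpu, hch, hwu, hxu, hxw, hwS⟩ := struct u hu
    have hfne : f u ≠ f w := fun hc => hwu (finj hc).symm
    rcases lt_or_gt_of_ne hfne with hlt | hlt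
    · exact ⟨(u, w), (memP (u, w)).2 ⟨hu, hwS, hlt, x, hxu, hxw⟩, Or.inl rfl⟩
    · exact ⟨(w, u), (memP (w, u)).2 ⟨hwS, hu, hlt, x, hxw, hxu⟩, Or.inr rfl⟩
  -- cardinality of P
  have im1 : (P.image Prod.fst) ∪ (P.image Prod.snd) = S' := by
    ext u
    rw [Finset.mem_union, Finset.mem_image, Finset.mem_image]
    constructor
    · rintro (⟨q, hq, rfl⟩ | ⟨q, hq, rfl⟩)
      · exact ((memP q).1 hq).1
      · exact ((memP q).1 hq).2.1
    · intro hu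
      obtain ⟨q, hq, rfl | rfl⟩ := cover u hu
      · exact Or.inl ⟨q, hq, rfl⟩
      · exact Or.inr ⟨q, hq, rfl⟩
  have inj1 : Set.InjOn Prod.fst ↑P := fun q hq q' hq' heq =>
    pdet q (Finset.mem_coe.1 hq) q' (Finset.mem_coe.1 hq') (Or.inl heq)
  have inj2 : Set.InjOn Prod.snd ↑P := fun q hq q' hq' heq =>
    pdet q (Finset.mem_coe.1 hq) q' (Finset.mem_coe.1 hq')
      (Or.inr (Or.inr (Or.inr heq)))
  have disj : Disjoint (P.image Prod.fst) (P.image Prod.snd) := by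
    rw [Finset.disjoint_left]
    intro a ha1 ha2
    obtain ⟨q, hq, hq1⟩ := Finset.mem_image.1 ha1
    obtain ⟨q', hq', hq2⟩ := Finset.mem_image.1 ha2
    have := pdet q hq q' hq' (Or.inr (Or.inl (hq1.trans hq2.symm)))
    subst this
    have hlt := ((memP q).1 hq).2.2.1
    rw [hq1] at hlt
    rw [hq2] at hlt
    exact lt_irrefl (f a) hlt
  have ecard : S'.card = P.card + P.card := by
    rw [← im1, Finset.card_union_of_disjoint disj, Finset.card_image_of_injOn inj1,
      Finset.card_image_of_injOn inj2]
  have hPcard : P.card + h + 1 = n := by omega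
  -- conclusion
  refine ⟨r, P, hr, by push_cast [← hPcard]; ring, ?_, ?_, ?_⟩
  · intro q hq
    obtain ⟨-, -, hlt, hx⟩ := (memP q).1 hq
    exact ⟨fun hc => by rw [hc] at hlt; exact lt_irrefl _ hlt, hx⟩
  · intro q hq q' hq' hne
    refine ⟨fun hc => hne (pdet q hq q' hq' (Or.inl hc)),
      fun hc => hne (pdet q hq q' hq' (Or.inr (Or.inl hc))),
      fun hc => hne (pdet q hq q' hq' (Or.inr (Or.inr (Or.inl hc)))),
      fun hc => hne (pdet q hq q' hq' (Or.inr (Or.inr (Or.inr hc))))⟩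
  · intro u
    constructor
    · intro hu
      by_cases hur : u = r
      · exact Or.inl hur
      · refine Or.inr ?_
        have huS : u ∈ S' := (memS' u).2 ⟨hur, hu⟩
        obtain ⟨q, hq, hcase⟩ := cover u huS
        exact ⟨q, hq, hcase⟩
    · rintro (rfl | ⟨q, hq, rfl | rfl⟩)
      · exact root_tree (N := N) hr
      · exact ((memS' q.1).1 ((memP q).1 hq).1).2
      · exact ((memS' q.2).1 ((memP q).1 hq).2.1).2


end AuxStmt10

/-- In a binary tree-child network with n leaves and h hybrid nodes, the set of
tree nodes having neither a hybrid parent nor a hybrid sibling consists of the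
root together with (n - h - 1) pairwise disjoint pairs of sibling tree nodes. -/
theorem stmt10 {V : Type} [Finite V] (N : BTC V) (n h : ℕ)
    (hn : n = Nat.card {v : V // IsLeaf N.Arc v})
    (hh : h = Nat.card {v : V // IsHybrid N.Arc v}) :
    ∃ (r : V) (P : Finset (V × V)),
      indeg N.Arc r = 0 ∧
      (P.card : ℤ) = (n : ℤ) - (h : ℤ) - 1 ∧
      (∀ q ∈ P, q.1 ≠ q.2 ∧ (∃ x : V, N.Arc x q.1 ∧ N.Arc x q.2)) ∧
      (∀ q ∈ P, ∀ q' ∈ P, q ≠ q' →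
        q.1 ≠ q'.1 ∧ q.1 ≠ q'.2 ∧ q.2 ≠ q'.1 ∧ q.2 ≠ q'.2) ∧
      (∀ u : V,
        (IsTreeNode N.Arc u ∧ ¬ HasHybridParent N.Arc u ∧
          ¬ HasHybridSibling N.Arc u) ↔
        (u = r ∨ ∃ q ∈ P, u = q.1 ∨ u = q.2)) := by
  cases nonempty_fintype V
  exact stmt10' N n h hn hh
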